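/- arXiv:2402.15976 — 2 statements merged into one kernel-verified Lean document; each statement's English description precedes it below -/
import Mathlib

section
/- Let f : ℝⁿ → ℂ be in L² with support in B_R and ‖f‖_{L²} ≤ M. Define I₁(s) = ∫_{Sⁿ⁻¹} ∫₀¹ sⁿ t^{n-1} |∫_{ℝⁿ} f(x) e^{-i s t ξ̂·x} dx|² dt dσ(ξ̂) for complex s. Then I₁ extends to an entire function of s ∈ ℂ, and for all s = s₁ + i s₂ it satisfies |I₁(s)| ≤ C |s|ⁿ e^{2R|s₂|} M², where C > 0 depends only on n and R. -/
open MeasureTheory Real Filter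
open scoped InnerProductSpace ENNReal NNReal Pointwise

noncomputable section

/-- The analytic extension `I₁(s)` of `∫_{|ξ|≤s} |f̂(ξ)|² dξ`, written in polar
coordinates with the substitution `k = s t`:
`I₁(s) = ∫_{Sⁿ⁻¹} ∫₀¹ sⁿ t^{n-1} (∫ f(x) e^{-i s t ξ̂·x} dx)(∫ conj f(x) e^{i s t ξ̂·x} dx) dt dσ(ξ̂)`,
where `σ` is the surface ((n-1)-dimensional Hausdorff) measure on the unit sphere. -/
def I1 {n : ℕ} (f : EuclideanSpace ℝ (Fin n) → ℂ) (s : ℂ) : ℂ :=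
  ∫ ω in Metric.sphere (0 : EuclideanSpace ℝ (Fin n)) 1,
    (∫ t in Set.Ioo (0 : ℝ) 1,
      s ^ n * (t : ℂ) ^ (n - 1) *
        (∫ x, f x * Complex.exp (-Complex.I * s * (t : ℂ) * ((⟪ω, x⟫_ℝ : ℝ) : ℂ))) *
        (∫ x, (starRingEnd ℂ) (f x) *
          Complex.exp (Complex.I * s * (t : ℂ) * ((⟪ω, x⟫_ℝ : ℝ) : ℂ))))
    ∂ μH[(n : ℝ) - 1]

namespace KernelAux

lemma abs_coord_le_norm {n : ℕ} (x : EuclideanSpace ℝ (Fin n)) (i : Fin n) : |x i| ≤ ‖x‖ := by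
  rw [EuclideanSpace.norm_eq, ← Real.sqrt_sq_eq_abs]
  apply Real.sqrt_le_sqrt
  have := Finset.single_le_sum (f := fun j => ‖x j‖ ^ 2)
    (fun j _ => by positivity) (Finset.mem_univ i)
  simpa [Real.norm_eq_abs, sq_abs] using this

lemma lipschitz_proj {F : Type*} [NormedAddCommGroup F] [NormedSpace ℝ F] :
    LipschitzOnWith 2 (fun x : F => ‖x‖⁻¹ • x) {x : F | 1 ≤ ‖x‖} := by
  rw [lipschitzOnWith_iff_dist_le_mul]
  intro x hx y hy
  simp only [Set.mem_setOf_eq] at hx hy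
  have hx0 : (0:ℝ) < ‖x‖ := lt_of_lt_of_le one_pos hx
  have hy0 : (0:ℝ) < ‖y‖ := lt_of_lt_of_le one_pos hy
  rw [dist_eq_norm, dist_eq_norm]
  have key : ‖x‖⁻¹ • x - ‖y‖⁻¹ • y = ‖x‖⁻¹ • (x - y) + (‖x‖⁻¹ - ‖y‖⁻¹) • y := by
    rw [smul_sub, sub_smul]; abel
  rw [key]
  have h1 : ‖‖x‖⁻¹ • (x - y)‖ ≤ ‖x - y‖ := by
    rw [norm_smul, norm_inv, norm_norm]
    calc ‖x‖⁻¹ * ‖x - y‖ ≤ 1 * ‖x - y‖ :=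
          mul_le_mul_of_nonneg_right (inv_le_one_of_one_le₀ hx) (norm_nonneg _)
      _ = ‖x - y‖ := one_mul _
  have h2 : ‖(‖x‖⁻¹ - ‖y‖⁻¹) • y‖ ≤ ‖x - y‖ := by
    rw [norm_smul, Real.norm_eq_abs]
    have hd : ‖x‖⁻¹ - ‖y‖⁻¹ = (‖y‖ - ‖x‖) * (‖x‖⁻¹ * ‖y‖⁻¹) := by
      field_simp
    rw [hd, abs_mul, abs_of_nonneg (by positivity : (0:ℝ) ≤ ‖x‖⁻¹ * ‖y‖⁻¹)]
    have habs : |‖y‖ - ‖x‖| ≤ ‖x - y‖ := by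
      rw [← norm_sub_rev]
      exact abs_norm_sub_norm_le y x
    calc |‖y‖ - ‖x‖| * (‖x‖⁻¹ * ‖y‖⁻¹) * ‖y‖
        = |‖y‖ - ‖x‖| * ‖x‖⁻¹ * (‖y‖⁻¹ * ‖y‖) := by ring
      _ = |‖y‖ - ‖x‖| * ‖x‖⁻¹ := by rw [inv_mul_cancel₀ (ne_of_gt hy0), mul_one]
      _ ≤ ‖x - y‖ * 1 :=
          mul_le_mul habs (inv_le_one_of_one_le₀ hx) (by positivity) (norm_nonneg _)
      _ = ‖x - y‖ := mul_one _
  calc ‖‖x‖⁻¹ • (x - y) + (‖x‖⁻¹ - ‖y‖⁻¹) • y‖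
      ≤ ‖‖x‖⁻¹ • (x - y)‖ + ‖(‖x‖⁻¹ - ‖y‖⁻¹) • y‖ := norm_add_le _ _
    _ ≤ ‖x - y‖ + ‖x - y‖ := add_le_add h1 h2
    _ = (2:ℝ≥0) * ‖x - y‖ := by push_cast; ring

/-- inserting a zero coordinate, from the sup-metric space into Euclidean space -/
def insMap (m : ℕ) (i : Fin (m + 1)) (y : Fin m → ℝ) : EuclideanSpace ℝ (Fin (m + 1)) :=
  WithLp.toLp 2 (i.insertNth 0 y)

lemma insMap_lipschitz (m : ℕ) (i : Fin (m + 1)) :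
    LipschitzWith (Real.sqrt (m + 1)).toNNReal (insMap m i) := by
  apply LipschitzWith.of_dist_le_mul
  intro y y'
  rw [EuclideanSpace.dist_eq]
  have hsum : ∑ j, dist (insMap m i y j) (insMap m i y' j) ^ 2
      = ∑ k : Fin m, dist (y k) (y' k) ^ 2 := by
    rw [Fin.sum_univ_succAbove (fun j => dist (insMap m i y j) (insMap m i y' j) ^ 2) i]
    simp [insMap, Fin.insertNth_apply_same, Fin.insertNth_apply_succAbove]
  rw [hsum]
  have hle : ∑ k : Fin m, dist (y k) (y' k) ^ 2 ≤ (m + 1) * dist y y' ^ 2 := by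
    calc ∑ k : Fin m, dist (y k) (y' k) ^ 2
        ≤ ∑ _k : Fin m, dist y y' ^ 2 := by
          apply Finset.sum_le_sum
          intro k _
          have := dist_le_pi_dist y y' k
          nlinarith [dist_nonneg (x := y k) (y := y' k)]
      _ = (m : ℝ) * dist y y' ^ 2 := by simp [mul_comm]
      _ ≤ (m + 1) * dist y y' ^ 2 := by nlinarith [sq_nonneg (dist y y')]
  calc Real.sqrt (∑ k : Fin m, dist (y k) (y' k) ^ 2)
      ≤ Real.sqrt ((m + 1) * dist y y' ^ 2) := Real.sqrt_le_sqrt hle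
    _ = Real.sqrt (m + 1) * dist y y' := by
        rw [Real.sqrt_mul (by positivity), Real.sqrt_sq dist_nonneg]
    _ = ((Real.sqrt (m + 1)).toNNReal : ℝ) * dist y y' := by
        rw [Real.coe_toNNReal _ (Real.sqrt_nonneg _)]

lemma subset_insMap_image (m : ℕ) (i : Fin (m + 1)) :
    {x : EuclideanSpace ℝ (Fin (m + 1)) | x i = 0 ∧ ∀ j, |x j| ≤ 1}
      ⊆ insMap m i '' Metric.closedBall 0 1 := by
  rintro x ⟨hxi, hxj⟩
  refine ⟨i.removeNth x, ?_, ?_⟩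
  · rw [Metric.mem_closedBall]
    rw [dist_pi_le_iff zero_le_one]
    intro k
    simpa [Real.dist_eq, Fin.removeNth] using hxj (i.succAbove k)
  · rw [insMap, ← hxi]
    exact congrArg (WithLp.toLp 2) (Fin.insertNth_self_removeNth i x.ofLp)

lemma insMap_image_hausdorff_lt_top (m : ℕ) (i : Fin (m + 1)) :
    μH[(m : ℝ)] (insMap m i '' Metric.closedBall 0 1) < ⊤ := by
  have hle := (insMap_lipschitz m i).hausdorffMeasure_image_le
    (by positivity : (0:ℝ) ≤ (m:ℝ)) (Metric.closedBall 0 1)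
  refine lt_of_le_of_lt hle ?_
  have hpi : (μH[(m : ℝ)] : Measure (Fin m → ℝ)) = volume := by
    simpa [Fintype.card_fin] using (hausdorffMeasure_pi_real (ι := Fin m))
  rw [hpi]
  exact ENNReal.mul_lt_top
    (ENNReal.rpow_lt_top_of_nonneg (by positivity) ENNReal.coe_ne_top)
    (isCompact_closedBall _ _).measure_lt_top

lemma sphere_hausdorff_lt_top (m : ℕ) :
    μH[(m : ℝ)] (Metric.sphere (0 : EuclideanSpace ℝ (Fin (m + 1))) 1) < ⊤ := by
  classical
  set proj : EuclideanSpace ℝ (Fin (m + 1)) → EuclideanSpace ℝ (Fin (m + 1)) := fun x => ‖x‖⁻¹ • x with hproj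
  set face : Fin (m + 1) → Bool → Set (EuclideanSpace ℝ (Fin (m + 1))) := fun i b =>
    {x : EuclideanSpace ℝ (Fin (m + 1)) | x i = (if b then (1:ℝ) else -1) ∧ ∀ j, |x j| ≤ 1}
    with hface
  -- the sphere is covered by radial projections of cube faces
  have hcover : Metric.sphere (0 : EuclideanSpace ℝ (Fin (m + 1))) 1 ⊆ ⋃ i, ⋃ b, proj '' face i b := by
    intro u hu
    have hnu : ‖u‖ = 1 := by simpa using mem_sphere_zero_iff_norm.mp hu
    obtain ⟨i, -, hi⟩ := Finset.exists_max_image Finset.univ (fun j => |u j|)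
      ⟨0, Finset.mem_univ 0⟩
    have ha0 : 0 < |u i| := by
      rcases lt_or_ge 0 |u i| with h | h
      · exact h
      · exfalso
        have : u = 0 := by
          ext j
          have := hi j (Finset.mem_univ j)
          have : |u j| = 0 := le_antisymm (le_trans this h) (abs_nonneg _)
          simpa [abs_eq_zero] using this
        rw [this] at hnu; simp at hnu
    set a : ℝ := |u i| with ha
    have ha1 : a ≤ 1 := by
      rw [ha, ← hnu]; exact abs_coord_le_norm u i
    set x : EuclideanSpace ℝ (Fin (m + 1)) := a⁻¹ • u with hx
    have hxi : |x i| = 1 := by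
      have : x i = a⁻¹ * u i := rfl
      rw [this, abs_mul, abs_inv, abs_of_pos ha0]
      field_simp
      exact ha.symm
    have hxj : ∀ j, |x j| ≤ 1 := by
      intro j
      have : x j = a⁻¹ * u j := rfl
      rw [this, abs_mul, abs_inv, abs_of_pos ha0, inv_mul_le_iff₀ ha0, mul_one]
      exact hi j (Finset.mem_univ j)
    have hb : x i = 1 ∨ x i = -1 := by
      rcases abs_eq (by norm_num : (0:ℝ) ≤ 1) |>.mp hxi with h | h
      · exact Or.inl h
      · exact Or.inr h
    have hnx : ‖x‖ = a⁻¹ := by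
      rw [hx, norm_smul, Real.norm_eq_abs, abs_inv, abs_of_pos ha0, hnu, mul_one]
    have hproju : proj x = u := by
      rw [hproj]
      simp only
      rw [hnx, inv_inv, hx, smul_smul, mul_inv_cancel₀ (ne_of_gt ha0), one_smul]
    rcases hb with h | h
    · exact Set.mem_iUnion.mpr ⟨i, Set.mem_iUnion.mpr ⟨true, ⟨x, ⟨by simpa using h, hxj⟩, hproju⟩⟩⟩
    · exact Set.mem_iUnion.mpr ⟨i, Set.mem_iUnion.mpr ⟨false, ⟨x, ⟨by simpa using h, hxj⟩, hproju⟩⟩⟩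
  -- each projected face has finite measure
  have hface_fin : ∀ (i : Fin (m + 1)) (b : Bool), μH[(m : ℝ)] (proj '' face i b) < ⊤ := by
    intro i b
    have hsub : face i b ⊆ {x : EuclideanSpace ℝ (Fin (m + 1)) | 1 ≤ ‖x‖} := by
      rintro x ⟨hxi, -⟩
      have : |x i| = 1 := by rcases b with _ | _ <;> simp [hxi]
      calc (1:ℝ) = |x i| := this.symm
        _ ≤ ‖x‖ := abs_coord_le_norm x i
    have hlip : LipschitzOnWith 2 proj (face i b) := lipschitz_proj.mono hsub
    have h1 := hlip.hausdorffMeasure_image_le (by positivity : (0:ℝ) ≤ (m:ℝ))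
    refine lt_of_le_of_lt h1 ?_
    apply ENNReal.mul_lt_top
      (ENNReal.rpow_lt_top_of_nonneg (by positivity) ENNReal.coe_ne_top)
    -- face is contained in a translate of insMap '' closedBall
    set v : EuclideanSpace ℝ (Fin (m + 1)) :=
      (EuclideanSpace.single i ((if b then (1:ℝ) else -1)))
    have hsub2 : face i b ⊆ v +ᵥ (insMap m i '' Metric.closedBall 0 1) := by
      rintro x ⟨hxi, hxj⟩
      refine ⟨x - v, ?_, by simp⟩
      apply subset_insMap_image m i
      constructor
      · have : (x - v) i = x i - v i := by simp
        rw [this, hxi]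
        simp [v, EuclideanSpace.single_apply]
      · intro j
        rcases eq_or_ne j i with rfl | hji
        · have : (x - v) j = x j - v j := by simp
          rw [this, hxi]
          simp [v, EuclideanSpace.single_apply]
        · have : (x - v) j = x j - v j := by simp
          rw [this]
          have : v j = 0 := by simp [v, EuclideanSpace.single_apply, hji]
          rw [this, sub_zero]
          exact hxj j
    refine lt_of_le_of_lt (measure_mono hsub2) ?_
    rw [MeasureTheory.hausdorffMeasure_vadd v (Or.inl (by positivity : (0:ℝ) ≤ (m:ℝ)))]
    exact insMap_image_hausdorff_lt_top m i
  calc μH[(m : ℝ)] (Metric.sphere (0 : EuclideanSpace ℝ (Fin (m + 1))) 1)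
      ≤ μH[(m : ℝ)] (⋃ i, ⋃ b, proj '' face i b) := measure_mono hcover
    _ ≤ ∑ i : Fin (m+1), μH[(m : ℝ)] (⋃ b, proj '' face i b) := by
        refine le_trans (measure_iUnion_le _) ?_
        rw [tsum_fintype]
    _ < ⊤ := by
        apply ENNReal.sum_lt_top.mpr
        intro i _
        calc μH[(m : ℝ)] (⋃ b, proj '' face i b)
            ≤ ∑ b : Bool, μH[(m : ℝ)] (proj '' face i b) := by
              refine le_trans (measure_iUnion_le _) ?_
              rw [tsum_fintype]
          _ < ⊤ := ENNReal.sum_lt_top.mpr fun b _ => hface_fin i b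



variable {n : ℕ}

/-- analytic kernel `∫ f(x) e^{ε i z ⟨ω,x⟩} dx` -/
def K1 (f : EuclideanSpace ℝ (Fin n) → ℂ) (ω : EuclideanSpace ℝ (Fin n)) (ε : ℝ) (z : ℂ) : ℂ :=
  ∫ x, f x * Complex.exp ((ε : ℂ) * Complex.I * z * ((⟪ω, x⟫_ℝ : ℝ) : ℂ))

/-- its derivative in `z` -/
def K2 (f : EuclideanSpace ℝ (Fin n) → ℂ) (ω : EuclideanSpace ℝ (Fin n)) (ε : ℝ) (z : ℂ) : ℂ :=
  ∫ x, (ε : ℂ) * Complex.I * ((⟪ω, x⟫_ℝ : ℝ) : ℂ) * f x *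
    Complex.exp ((ε : ℂ) * Complex.I * z * ((⟪ω, x⟫_ℝ : ℝ) : ℂ))

lemma cont_inner_x (ω : EuclideanSpace ℝ (Fin n)) :
    Continuous fun x : EuclideanSpace ℝ (Fin n) => ((⟪ω, x⟫_ℝ : ℝ) : ℂ) :=
  Complex.continuous_ofReal.comp (continuous_const.inner continuous_id)

lemma cont_inner_omega (x : EuclideanSpace ℝ (Fin n)) :
    Continuous fun ω : EuclideanSpace ℝ (Fin n) => ((⟪ω, x⟫_ℝ : ℝ) : ℂ) :=
  Complex.continuous_ofReal.comp (continuous_id.inner continuous_const)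

lemma norm_exp_kernel (ε : ℝ) (z : ℂ) (c : ℝ) :
    ‖Complex.exp ((ε : ℂ) * Complex.I * z * (c : ℂ))‖ = Real.exp (ε * (-z.im) * c) := by
  rw [Complex.norm_exp]
  congr 1
  simp [Complex.mul_re, Complex.mul_im]

section bounds

variable {R B : ℝ} {f : EuclideanSpace ℝ (Fin n) → ℂ} {ω : EuclideanSpace ℝ (Fin n)} {ε : ℝ}

lemma exp_re_bound (hR : 0 ≤ R) (hB : 0 ≤ B) (hω : ‖ω‖ ≤ B) (hε : |ε| ≤ 1) (z : ℂ)
    {x : EuclideanSpace ℝ (Fin n)} (hx : ‖x‖ ≤ R) :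
    ε * (-z.im) * ⟪ω, x⟫_ℝ ≤ B * R * |z.im| := by
  have hc : |⟪ω, x⟫_ℝ| ≤ B * R :=
    (abs_real_inner_le_norm ω x).trans (mul_le_mul hω hx (norm_nonneg _) hB)
  calc ε * (-z.im) * ⟪ω, x⟫_ℝ ≤ |ε * (-z.im) * ⟪ω, x⟫_ℝ| := le_abs_self _
    _ = |ε| * |z.im| * |⟪ω, x⟫_ℝ| := by rw [abs_mul, abs_mul, abs_neg]
    _ ≤ 1 * |z.im| * (B * R) :=
        mul_le_mul (mul_le_mul_of_nonneg_right hε (abs_nonneg _)) hc (abs_nonneg _)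
          (by positivity)
    _ = B * R * |z.im| := by ring

lemma pt_bound1 (hR : 0 ≤ R) (hsupp : Function.support f ⊆ Metric.ball 0 R)
    (hB : 0 ≤ B) (hω : ‖ω‖ ≤ B) (hε : |ε| ≤ 1) (z : ℂ) (x : EuclideanSpace ℝ (Fin n)) :
    ‖f x * Complex.exp ((ε : ℂ) * Complex.I * z * ((⟪ω, x⟫_ℝ : ℝ) : ℂ))‖
      ≤ ‖f x‖ * Real.exp (B * R * |z.im|) := by
  by_cases hfx : f x = 0
  · simp only [hfx, zero_mul, mul_zero, norm_zero]
    positivity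
  · have hx : ‖x‖ ≤ R := by
      have := hsupp (Function.mem_support.mpr hfx)
      rw [mem_ball_zero_iff] at this
      exact this.le
    rw [norm_mul, norm_exp_kernel]
    exact mul_le_mul_of_nonneg_left
      (Real.exp_le_exp.mpr (exp_re_bound hR hB hω hε z hx)) (norm_nonneg _)

lemma pt_bound2 (hR : 0 ≤ R) (hsupp : Function.support f ⊆ Metric.ball 0 R)
    (hB : 0 ≤ B) (hω : ‖ω‖ ≤ B) (hε : |ε| ≤ 1) (z : ℂ) (x : EuclideanSpace ℝ (Fin n)) :
    ‖(ε : ℂ) * Complex.I * ((⟪ω, x⟫_ℝ : ℝ) : ℂ) * f x *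
        Complex.exp ((ε : ℂ) * Complex.I * z * ((⟪ω, x⟫_ℝ : ℝ) : ℂ))‖
      ≤ B * R * ‖f x‖ * Real.exp (B * R * |z.im|) := by
  by_cases hfx : f x = 0
  · simp only [hfx, zero_mul, mul_zero, norm_zero]
    positivity
  · have hx : ‖x‖ ≤ R := by
      have := hsupp (Function.mem_support.mpr hfx)
      rw [mem_ball_zero_iff] at this
      exact this.le
    have hc : |⟪ω, x⟫_ℝ| ≤ B * R :=
      (abs_real_inner_le_norm ω x).trans (mul_le_mul hω hx (norm_nonneg _) hB)
    rw [norm_mul, norm_mul, norm_exp_kernel, norm_mul, norm_mul]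
    simp only [Complex.norm_real, Complex.norm_I, Real.norm_eq_abs, mul_one]
    calc |ε| * |⟪ω, x⟫_ℝ| * ‖f x‖ * Real.exp (ε * (-z.im) * ⟪ω, x⟫_ℝ)
        ≤ 1 * (B * R) * ‖f x‖ * Real.exp (B * R * |z.im|) := by
          refine mul_le_mul ?_ (Real.exp_le_exp.mpr (exp_re_bound hR hB hω hε z hx))
            (Real.exp_nonneg _) (by positivity)
          exact mul_le_mul_of_nonneg_right
            (mul_le_mul hε hc (abs_nonneg _) one_pos.le) (norm_nonneg _)
      _ = B * R * ‖f x‖ * Real.exp (B * R * |z.im|) := by ring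

lemma meas1 (hf : AEStronglyMeasurable f volume) (ω : EuclideanSpace ℝ (Fin n)) (ε : ℝ) (z : ℂ) :
    AEStronglyMeasurable
      (fun x => f x * Complex.exp ((ε : ℂ) * Complex.I * z * ((⟪ω, x⟫_ℝ : ℝ) : ℂ))) volume :=
  hf.mul ((Complex.continuous_exp.comp (continuous_const.mul (cont_inner_x ω))).aestronglyMeasurable)

lemma meas2 (hf : AEStronglyMeasurable f volume) (ω : EuclideanSpace ℝ (Fin n)) (ε : ℝ) (z : ℂ) :
    AEStronglyMeasurable
      (fun x => (ε : ℂ) * Complex.I * ((⟪ω, x⟫_ℝ : ℝ) : ℂ) * f x *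
        Complex.exp ((ε : ℂ) * Complex.I * z * ((⟪ω, x⟫_ℝ : ℝ) : ℂ))) volume :=
  (((continuous_const.mul (cont_inner_x ω)).aestronglyMeasurable.mul hf).mul
    ((Complex.continuous_exp.comp (continuous_const.mul (cont_inner_x ω))).aestronglyMeasurable))

lemma int1 (hR : 0 ≤ R) (hf : Integrable f volume)
    (hsupp : Function.support f ⊆ Metric.ball 0 R)
    (hB : 0 ≤ B) (hω : ‖ω‖ ≤ B) (hε : |ε| ≤ 1) (z : ℂ) :
    Integrable
      (fun x => f x * Complex.exp ((ε : ℂ) * Complex.I * z * ((⟪ω, x⟫_ℝ : ℝ) : ℂ))) volume :=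
  Integrable.mono' (hf.norm.mul_const (Real.exp (B * R * |z.im|)))
    (meas1 hf.aestronglyMeasurable ω ε z)
    (Filter.Eventually.of_forall (pt_bound1 hR hsupp hB hω hε z))

lemma int2 (hR : 0 ≤ R) (hf : Integrable f volume)
    (hsupp : Function.support f ⊆ Metric.ball 0 R)
    (hB : 0 ≤ B) (hω : ‖ω‖ ≤ B) (hε : |ε| ≤ 1) (z : ℂ) :
    Integrable
      (fun x => (ε : ℂ) * Complex.I * ((⟪ω, x⟫_ℝ : ℝ) : ℂ) * f x *
        Complex.exp ((ε : ℂ) * Complex.I * z * ((⟪ω, x⟫_ℝ : ℝ) : ℂ))) volume :=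
  Integrable.mono' (((hf.norm.const_mul (B * R)).mul_const (Real.exp (B * R * |z.im|))))
    (meas2 hf.aestronglyMeasurable ω ε z)
    (Filter.Eventually.of_forall fun x => by
      have := pt_bound2 hR hsupp hB hω hε z x
      calc ‖_‖ ≤ B * R * ‖f x‖ * Real.exp (B * R * |z.im|) := this
        _ = B * R * ‖f x‖ * Real.exp (B * R * |z.im|) := rfl)

lemma K1_bound (hR : 0 ≤ R) (hf : Integrable f volume)
    (hsupp : Function.support f ⊆ Metric.ball 0 R)
    (hB : 0 ≤ B) (hω : ‖ω‖ ≤ B) (hε : |ε| ≤ 1) (z : ℂ) :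
    ‖K1 f ω ε z‖ ≤ (∫ x, ‖f x‖) * Real.exp (B * R * |z.im|) := by
  rw [K1]
  calc ‖∫ x, f x * Complex.exp ((ε : ℂ) * Complex.I * z * ((⟪ω, x⟫_ℝ : ℝ) : ℂ))‖
      ≤ ∫ x, ‖f x‖ * Real.exp (B * R * |z.im|) :=
        norm_integral_le_of_norm_le (hf.norm.mul_const _)
          (Filter.Eventually.of_forall (pt_bound1 hR hsupp hB hω hε z))
    _ = (∫ x, ‖f x‖) * Real.exp (B * R * |z.im|) := integral_mul_const _ _

lemma K2_bound (hR : 0 ≤ R) (hf : Integrable f volume)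
    (hsupp : Function.support f ⊆ Metric.ball 0 R)
    (hB : 0 ≤ B) (hω : ‖ω‖ ≤ B) (hε : |ε| ≤ 1) (z : ℂ) :
    ‖K2 f ω ε z‖ ≤ B * R * (∫ x, ‖f x‖) * Real.exp (B * R * |z.im|) := by
  rw [K2]
  calc ‖∫ x, (ε : ℂ) * Complex.I * ((⟪ω, x⟫_ℝ : ℝ) : ℂ) * f x *
          Complex.exp ((ε : ℂ) * Complex.I * z * ((⟪ω, x⟫_ℝ : ℝ) : ℂ))‖
      ≤ ∫ x, B * R * ‖f x‖ * Real.exp (B * R * |z.im|) :=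
        norm_integral_le_of_norm_le ((hf.norm.const_mul (B * R)).mul_const _)
          (Filter.Eventually.of_forall (pt_bound2 hR hsupp hB hω hε z))
    _ = B * R * (∫ x, ‖f x‖) * Real.exp (B * R * |z.im|) := by
        rw [integral_mul_const, integral_const_mul]

/-- differentiability of `K1` in `z`, with derivative `K2`. -/
lemma K1_hasDerivAt (hR : 0 ≤ R) (hf : Integrable f volume)
    (hsupp : Function.support f ⊆ Metric.ball 0 R)
    (hB : 0 ≤ B) (hω : ‖ω‖ ≤ B) (hε : |ε| ≤ 1) (z : ℂ) :
    HasDerivAt (K1 f ω ε) (K2 f ω ε z) z := by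
  have key := hasDerivAt_integral_of_dominated_loc_of_deriv_le (𝕜 := ℂ)
    (F := fun z x => f x * Complex.exp ((ε : ℂ) * Complex.I * z * ((⟪ω, x⟫_ℝ : ℝ) : ℂ)))
    (F' := fun z x => (ε : ℂ) * Complex.I * ((⟪ω, x⟫_ℝ : ℝ) : ℂ) * f x *
      Complex.exp ((ε : ℂ) * Complex.I * z * ((⟪ω, x⟫_ℝ : ℝ) : ℂ)))
    (x₀ := z)
    (bound := fun x => B * R * ‖f x‖ * Real.exp (B * R * (|z.im| + 1)))
    (Metric.ball_mem_nhds _ one_pos)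
    (Filter.Eventually.of_forall fun z' => meas1 hf.aestronglyMeasurable ω ε z')
    (int1 hR hf hsupp hB hω hε z)
    (meas2 hf.aestronglyMeasurable ω ε z)
    (Filter.Eventually.of_forall fun x => fun z' hz' => ?_)
    (((hf.norm.const_mul (B * R)).mul_const _))
    (Filter.Eventually.of_forall fun x => fun z' _ => ?_)
  · exact key.2
  · -- bound on the derivative
    have him : |z'.im| ≤ |z.im| + 1 := by
      have h1 : |z'.im - z.im| ≤ ‖z' - z‖ := by
        simpa using Complex.abs_im_le_norm (z' - z)
      have h2 : ‖z' - z‖ ≤ 1 := by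
        rw [← Complex.dist_eq]
        exact (Metric.mem_ball.mp hz').le
      calc |z'.im| = |z.im + (z'.im - z.im)| := by ring_nf
        _ ≤ |z.im| + |z'.im - z.im| := abs_add_le _ _
        _ ≤ |z.im| + 1 := by linarith [h1.trans h2]
    calc ‖(ε : ℂ) * Complex.I * ((⟪ω, x⟫_ℝ : ℝ) : ℂ) * f x *
            Complex.exp ((ε : ℂ) * Complex.I * z' * ((⟪ω, x⟫_ℝ : ℝ) : ℂ))‖
        ≤ B * R * ‖f x‖ * Real.exp (B * R * |z'.im|) := pt_bound2 hR hsupp hB hω hε z' x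
      _ ≤ B * R * ‖f x‖ * Real.exp (B * R * (|z.im| + 1)) := by
          refine mul_le_mul_of_nonneg_left (Real.exp_le_exp.mpr ?_) (by positivity)
          exact mul_le_mul_of_nonneg_left him (by positivity)
  · -- pointwise derivative
    have h1 : HasDerivAt (fun z : ℂ => (ε : ℂ) * Complex.I * z * ((⟪ω, x⟫_ℝ : ℝ) : ℂ))
        ((ε : ℂ) * Complex.I * 1 * ((⟪ω, x⟫_ℝ : ℝ) : ℂ)) z' :=
      (((hasDerivAt_id z').const_mul ((ε : ℂ) * Complex.I)).mul_const _)
    have h2 := (h1.cexp).const_mul (f x)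
    convert h2 using 1
    · rfl
    ring

lemma K1_continuous_z (hR : 0 ≤ R) (hf : Integrable f volume)
    (hsupp : Function.support f ⊆ Metric.ball 0 R)
    (hB : 0 ≤ B) (hω : ‖ω‖ ≤ B) (hε : |ε| ≤ 1) :
    Continuous (K1 f ω ε) := by
  have : Differentiable ℂ (K1 f ω ε) :=
    fun z => (K1_hasDerivAt hR hf hsupp hB hω hε z).differentiableAt
  exact this.continuous

lemma K2_continuous_z (hR : 0 ≤ R) (hf : Integrable f volume)
    (hsupp : Function.support f ⊆ Metric.ball 0 R)
    (hB : 0 ≤ B) (hω : ‖ω‖ ≤ B) (hε : |ε| ≤ 1) :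
    Continuous (K2 f ω ε) := by
  rw [continuous_iff_continuousAt]
  intro z
  apply continuousAt_of_dominated (bound := fun x => B * R * ‖f x‖ * Real.exp (B * R * (|z.im| + 1)))
  · exact Filter.Eventually.of_forall fun z' => meas2 hf.aestronglyMeasurable ω ε z'
  · filter_upwards [Metric.ball_mem_nhds z one_pos] with z' hz'
    refine Filter.Eventually.of_forall fun x => ?_
    have him : |z'.im| ≤ |z.im| + 1 := by
      have h1 : |z'.im - z.im| ≤ ‖z' - z‖ := by
        simpa using Complex.abs_im_le_norm (z' - z)
      have h2 : ‖z' - z‖ ≤ 1 := by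
        rw [← Complex.dist_eq]
        exact (Metric.mem_ball.mp hz').le
      calc |z'.im| = |z.im + (z'.im - z.im)| := by ring_nf
        _ ≤ |z.im| + |z'.im - z.im| := abs_add_le _ _
        _ ≤ |z.im| + 1 := by linarith [h1.trans h2]
    calc ‖(ε : ℂ) * Complex.I * ((⟪ω, x⟫_ℝ : ℝ) : ℂ) * f x *
            Complex.exp ((ε : ℂ) * Complex.I * z' * ((⟪ω, x⟫_ℝ : ℝ) : ℂ))‖
        ≤ B * R * ‖f x‖ * Real.exp (B * R * |z'.im|) := pt_bound2 hR hsupp hB hω hε z' x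
      _ ≤ B * R * ‖f x‖ * Real.exp (B * R * (|z.im| + 1)) := by
          refine mul_le_mul_of_nonneg_left (Real.exp_le_exp.mpr ?_) (by positivity)
          exact mul_le_mul_of_nonneg_left him (by positivity)
  · exact ((hf.norm.const_mul (B * R)).mul_const _)
  · refine Filter.Eventually.of_forall fun x => ?_
    exact (continuous_const.mul
      (Complex.continuous_exp.comp
        (((continuous_const.mul continuous_id).mul continuous_const)))).continuousAt

lemma K1_continuous_omega (hR : 0 ≤ R) (hf : Integrable f volume)
    (hsupp : Function.support f ⊆ Metric.ball 0 R) (hε : |ε| ≤ 1) (z : ℂ) :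
    Continuous (fun ω : EuclideanSpace ℝ (Fin n) => K1 f ω ε z) := by
  rw [continuous_iff_continuousAt]
  intro ω₀
  apply continuousAt_of_dominated
    (bound := fun x => ‖f x‖ * Real.exp ((‖ω₀‖ + 1) * R * |z.im|))
  · exact Filter.Eventually.of_forall fun ω => meas1 hf.aestronglyMeasurable ω ε z
  · filter_upwards [Metric.ball_mem_nhds ω₀ one_pos] with ω hω
    have hωB : ‖ω‖ ≤ ‖ω₀‖ + 1 := by
      have := (Metric.mem_ball.mp hω).le
      calc ‖ω‖ = ‖ω₀ + (ω - ω₀)‖ := by congr 1; abel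
        _ ≤ ‖ω₀‖ + ‖ω - ω₀‖ := norm_add_le _ _
        _ ≤ ‖ω₀‖ + 1 := by
            have : ‖ω - ω₀‖ ≤ 1 := by rwa [← dist_eq_norm]
            linarith
    exact Filter.Eventually.of_forall
      (pt_bound1 hR hsupp (by positivity) hωB hε z)
  · exact hf.norm.mul_const _
  · refine Filter.Eventually.of_forall fun x => ?_
    exact (continuous_const.mul
      (Complex.continuous_exp.comp (continuous_const.mul (cont_inner_omega x)))).continuousAt

lemma K2_continuous_omega (hR : 0 ≤ R) (hf : Integrable f volume)
    (hsupp : Function.support f ⊆ Metric.ball 0 R) (hε : |ε| ≤ 1) (z : ℂ) :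
    Continuous (fun ω : EuclideanSpace ℝ (Fin n) => K2 f ω ε z) := by
  rw [continuous_iff_continuousAt]
  intro ω₀
  apply continuousAt_of_dominated
    (bound := fun x => (‖ω₀‖ + 1) * R * ‖f x‖ * Real.exp ((‖ω₀‖ + 1) * R * |z.im|))
  · exact Filter.Eventually.of_forall fun ω => meas2 hf.aestronglyMeasurable ω ε z
  · filter_upwards [Metric.ball_mem_nhds ω₀ one_pos] with ω hω
    have hωB : ‖ω‖ ≤ ‖ω₀‖ + 1 := by
      calc ‖ω‖ = ‖ω₀ + (ω - ω₀)‖ := by congr 1; abel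
        _ ≤ ‖ω₀‖ + ‖ω - ω₀‖ := norm_add_le _ _
        _ ≤ ‖ω₀‖ + 1 := by
            have : ‖ω - ω₀‖ ≤ 1 := by
              rw [← dist_eq_norm]; exact (Metric.mem_ball.mp hω).le
            linarith
    exact Filter.Eventually.of_forall
      (pt_bound2 hR hsupp (by positivity) hωB hε z)
  · exact (hf.norm.const_mul _).mul_const _
  · refine Filter.Eventually.of_forall fun x => ?_
    exact (((continuous_const.mul (cont_inner_omega x)).mul continuous_const).mul
      (Complex.continuous_exp.comp (continuous_const.mul (cont_inner_omega x)))).continuousAt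

end bounds


/-! ### The inner integrand and its `s`-derivative -/

lemma norm_mul_le_of_le {a b : ℂ} {A B : ℝ} (ha : ‖a‖ ≤ A) (hb : ‖b‖ ≤ B) :
    ‖a * b‖ ≤ A * B := by
  rw [norm_mul]
  exact mul_le_mul ha hb (norm_nonneg _) ((norm_nonneg a).trans ha)

lemma norm_le_of_mem_ball {F : Type*} [NormedAddCommGroup F] {ω₀ ω : F}
    (hω : ω ∈ Metric.ball ω₀ 1) : ‖ω‖ ≤ ‖ω₀‖ + 1 := by
  calc ‖ω‖ = ‖ω₀ + (ω - ω₀)‖ := by congr 1; abel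
    _ ≤ ‖ω₀‖ + ‖ω - ω₀‖ := norm_add_le _ _
    _ ≤ ‖ω₀‖ + 1 := by
        have : ‖ω - ω₀‖ ≤ 1 := by
          rw [← dist_eq_norm]; exact (Metric.mem_ball.mp hω).le
        linarith

section conj

variable {R : ℝ} {f : EuclideanSpace ℝ (Fin n) → ℂ}

lemma conj_integrable (hf : Integrable f volume) :
    Integrable (fun x => (starRingEnd ℂ) (f x)) volume := by
  refine Integrable.mono' hf.norm
    (Continuous.comp_aestronglyMeasurable continuous_star hf.aestronglyMeasurable)
    (Filter.Eventually.of_forall fun x => by simp)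

lemma conj_support (hsupp : Function.support f ⊆ Metric.ball 0 R) :
    Function.support (fun x => (starRingEnd ℂ) (f x)) ⊆ Metric.ball 0 R := by
  intro x hx
  apply hsupp
  rw [Function.mem_support] at hx ⊢
  intro h0
  apply hx
  rw [h0, map_zero]

lemma conj_norm_integral :
    (∫ x, ‖(starRingEnd ℂ) (f x)‖) = ∫ x, ‖f x‖ := by
  congr 1
  funext x
  simp

end conj

section GD

variable {R : ℝ} {f : EuclideanSpace ℝ (Fin n) → ℂ} {ω : EuclideanSpace ℝ (Fin n)} {B : ℝ}

/-- the inner integrand of `I1` in terms of `K1` -/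
def Gfun (n : ℕ) (f : EuclideanSpace ℝ (Fin n) → ℂ) (ω : EuclideanSpace ℝ (Fin n))
    (s : ℂ) (t : ℝ) : ℂ :=
  s ^ n * (t : ℂ) ^ (n - 1) * K1 f ω (-1) (s * (t : ℂ)) *
    K1 (fun x => (starRingEnd ℂ) (f x)) ω 1 (s * (t : ℂ))

/-- the `s`-derivative of `Gfun` -/
def Dfun (n : ℕ) (f : EuclideanSpace ℝ (Fin n) → ℂ) (ω : EuclideanSpace ℝ (Fin n))
    (s : ℂ) (t : ℝ) : ℂ :=
  (↑n * s ^ (n - 1) * (t : ℂ) ^ (n - 1) * K1 f ω (-1) (s * (t : ℂ)) +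
      s ^ n * (t : ℂ) ^ (n - 1) * (K2 f ω (-1) (s * (t : ℂ)) * (t : ℂ))) *
    K1 (fun x => (starRingEnd ℂ) (f x)) ω 1 (s * (t : ℂ)) +
  s ^ n * (t : ℂ) ^ (n - 1) * K1 f ω (-1) (s * (t : ℂ)) *
    (K2 (fun x => (starRingEnd ℂ) (f x)) ω 1 (s * (t : ℂ)) * (t : ℂ))

lemma Gfun_hasDerivAt (hR : 0 ≤ R) (hf : Integrable f volume)
    (hsupp : Function.support f ⊆ Metric.ball 0 R) (ω : EuclideanSpace ℝ (Fin n))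
    (t : ℝ) (s : ℂ) :
    HasDerivAt (fun s => Gfun n f ω s t) (Dfun n f ω s t) s := by
  have h1 : HasDerivAt (fun s : ℂ => s * (t : ℂ)) ((t : ℂ)) s := hasDerivAt_mul_const _
  have hA : HasDerivAt (fun s : ℂ => K1 f ω (-1) (s * (t : ℂ)))
      (K2 f ω (-1) (s * (t : ℂ)) * (t : ℂ)) s := by
    have h0 := K1_hasDerivAt hR hf hsupp (norm_nonneg ω) le_rfl
      (by norm_num : |(-1 : ℝ)| ≤ 1) (s * (t : ℂ))
    exact h0.comp s h1
  have hBv : HasDerivAt (fun s : ℂ => K1 (fun x => (starRingEnd ℂ) (f x)) ω 1 (s * (t : ℂ)))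
      (K2 (fun x => (starRingEnd ℂ) (f x)) ω 1 (s * (t : ℂ)) * (t : ℂ)) s := by
    have h0 := K1_hasDerivAt hR (conj_integrable hf) (conj_support hsupp) (norm_nonneg ω) le_rfl
      (by norm_num : |(1 : ℝ)| ≤ 1) (s * (t : ℂ))
    exact h0.comp s h1
  have hpow := (hasDerivAt_pow n s).mul_const ((t : ℂ) ^ (n - 1))
  have hmain := (hpow.mul hA).mul hBv
  exact hmain

lemma Gfun_bound (hR : 0 ≤ R) (hf : Integrable f volume)
    (hsupp : Function.support f ⊆ Metric.ball 0 R) (hB : 0 ≤ B) (hω : ‖ω‖ ≤ B)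
    {t : ℝ} (ht : |t| ≤ 1) (s : ℂ) :
    ‖Gfun n f ω s t‖ ≤ ‖s‖ ^ n * ((∫ x, ‖f x‖) ^ 2 * Real.exp (2 * (B * R) * |s.im|)) := by
  have hL0 : (0:ℝ) ≤ ∫ x, ‖f x‖ := integral_nonneg fun x => norm_nonneg _
  have him : |(s * (t : ℂ)).im| ≤ |s.im| := by
    have h : (s * (t : ℂ)).im = s.im * t := by simp [Complex.mul_im]
    rw [h, abs_mul]
    exact mul_le_of_le_one_right (abs_nonneg _) ht
  have hexp : Real.exp (B * R * |(s * (t : ℂ)).im|) ≤ Real.exp (B * R * |s.im|) :=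
    Real.exp_le_exp.mpr (mul_le_mul_of_nonneg_left him (by positivity))
  have hA : ‖K1 f ω (-1) (s * (t : ℂ))‖ ≤ (∫ x, ‖f x‖) * Real.exp (B * R * |s.im|) :=
    (K1_bound (ε := -1) hR hf hsupp hB hω (by norm_num) _).trans
      (mul_le_mul_of_nonneg_left hexp hL0)
  have hBv : ‖K1 (fun x => (starRingEnd ℂ) (f x)) ω 1 (s * (t : ℂ))‖
      ≤ (∫ x, ‖f x‖) * Real.exp (B * R * |s.im|) := by
    have h0 := K1_bound (ε := 1) hR (conj_integrable hf) (conj_support hsupp) hB hω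
      (by norm_num) (s * (t : ℂ))
    rw [conj_norm_integral] at h0
    exact h0.trans (mul_le_mul_of_nonneg_left hexp hL0)
  have hsn : ‖s ^ n‖ ≤ ‖s‖ ^ n := le_of_eq (norm_pow _ _)
  have htn : ‖(t : ℂ) ^ (n - 1)‖ ≤ 1 := by
    rw [norm_pow]
    apply pow_le_one₀ (norm_nonneg _)
    simpa [Complex.norm_real, Real.norm_eq_abs] using ht
  calc ‖Gfun n f ω s t‖
      ≤ ‖s‖ ^ n * 1 * ((∫ x, ‖f x‖) * Real.exp (B * R * |s.im|)) *
          ((∫ x, ‖f x‖) * Real.exp (B * R * |s.im|)) := by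
        rw [Gfun]
        exact norm_mul_le_of_le (norm_mul_le_of_le (norm_mul_le_of_le hsn htn) hA) hBv
    _ = ‖s‖ ^ n * ((∫ x, ‖f x‖) ^ 2 * Real.exp (2 * (B * R) * |s.im|)) := by
        rw [show Real.exp (2 * (B * R) * |s.im|)
            = Real.exp (B * R * |s.im|) * Real.exp (B * R * |s.im|) by
          rw [← Real.exp_add]; congr 1; ring]
        ring

lemma Dfun_bound (hR : 0 ≤ R) (hf : Integrable f volume)
    (hsupp : Function.support f ⊆ Metric.ball 0 R) (hB : 0 ≤ B) (hω : ‖ω‖ ≤ B)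
    {t : ℝ} (ht : |t| ≤ 1) {s₀ s : ℂ} (hs : s ∈ Metric.ball s₀ 1) :
    ‖Dfun n f ω s t‖ ≤ ((n : ℝ) * (‖s₀‖ + 1) ^ (n - 1) + 2 * (B * R) * (‖s₀‖ + 1) ^ n) *
      ((∫ x, ‖f x‖) ^ 2 * Real.exp (2 * (B * R) * (|s₀.im| + 1))) := by
  have hL0 : (0:ℝ) ≤ ∫ x, ‖f x‖ := integral_nonneg fun x => norm_nonneg _
  have hsN : ‖s‖ ≤ ‖s₀‖ + 1 := norm_le_of_mem_ball hs
  have him : |(s * (t : ℂ)).im| ≤ |s₀.im| + 1 := by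
    have h : (s * (t : ℂ)).im = s.im * t := by simp [Complex.mul_im]
    have h2 : |s.im| ≤ |s₀.im| + 1 := by
      have h3 : |s.im - s₀.im| ≤ ‖s - s₀‖ := by
        simpa using Complex.abs_im_le_norm (s - s₀)
      have h4 : ‖s - s₀‖ ≤ 1 := by
        rw [← Complex.dist_eq]; exact (Metric.mem_ball.mp hs).le
      calc |s.im| = |s₀.im + (s.im - s₀.im)| := by ring_nf
        _ ≤ |s₀.im| + |s.im - s₀.im| := abs_add_le _ _
        _ ≤ |s₀.im| + 1 := by linarith [h3.trans h4]
    calc |(s * (t : ℂ)).im| = |s.im| * |t| := by rw [h, abs_mul]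
      _ ≤ |s.im| := mul_le_of_le_one_right (abs_nonneg _) ht
      _ ≤ |s₀.im| + 1 := h2
  have hexp : Real.exp (B * R * |(s * (t : ℂ)).im|) ≤ Real.exp (B * R * (|s₀.im| + 1)) :=
    Real.exp_le_exp.mpr (mul_le_mul_of_nonneg_left him (by positivity))
  have hA : ‖K1 f ω (-1) (s * (t : ℂ))‖
      ≤ (∫ x, ‖f x‖) * Real.exp (B * R * (|s₀.im| + 1)) :=
    (K1_bound (ε := -1) hR hf hsupp hB hω (by norm_num) _).trans
      (mul_le_mul_of_nonneg_left hexp hL0)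
  have hBv : ‖K1 (fun x => (starRingEnd ℂ) (f x)) ω 1 (s * (t : ℂ))‖
      ≤ (∫ x, ‖f x‖) * Real.exp (B * R * (|s₀.im| + 1)) := by
    have h0 := K1_bound (ε := 1) hR (conj_integrable hf) (conj_support hsupp) hB hω
      (by norm_num) (s * (t : ℂ))
    rw [conj_norm_integral] at h0
    exact h0.trans (mul_le_mul_of_nonneg_left hexp hL0)
  have ht1 : ‖(t : ℂ)‖ ≤ 1 := by
    simpa [Complex.norm_real, Real.norm_eq_abs] using ht
  have hA2 : ‖K2 f ω (-1) (s * (t : ℂ)) * (t : ℂ)‖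
      ≤ B * R * (∫ x, ‖f x‖) * Real.exp (B * R * (|s₀.im| + 1)) := by
    have h0 : ‖K2 f ω (-1) (s * (t : ℂ))‖
        ≤ B * R * (∫ x, ‖f x‖) * Real.exp (B * R * (|s₀.im| + 1)) :=
      (K2_bound (ε := -1) hR hf hsupp hB hω (by norm_num) _).trans
        (mul_le_mul_of_nonneg_left hexp (by positivity))
    calc ‖K2 f ω (-1) (s * (t : ℂ)) * (t : ℂ)‖
        ≤ (B * R * (∫ x, ‖f x‖) * Real.exp (B * R * (|s₀.im| + 1))) * 1 :=
          norm_mul_le_of_le h0 ht1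
      _ = _ := mul_one _
  have hB2 : ‖K2 (fun x => (starRingEnd ℂ) (f x)) ω 1 (s * (t : ℂ)) * (t : ℂ)‖
      ≤ B * R * (∫ x, ‖f x‖) * Real.exp (B * R * (|s₀.im| + 1)) := by
    have h0 := K2_bound (ε := 1) hR (conj_integrable hf) (conj_support hsupp) hB hω
      (by norm_num) (s * (t : ℂ))
    rw [conj_norm_integral] at h0
    have h0' : ‖K2 (fun x => (starRingEnd ℂ) (f x)) ω 1 (s * (t : ℂ))‖
        ≤ B * R * (∫ x, ‖f x‖) * Real.exp (B * R * (|s₀.im| + 1)) :=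
      h0.trans (mul_le_mul_of_nonneg_left hexp (by positivity))
    calc ‖K2 (fun x => (starRingEnd ℂ) (f x)) ω 1 (s * (t : ℂ)) * (t : ℂ)‖
        ≤ (B * R * (∫ x, ‖f x‖) * Real.exp (B * R * (|s₀.im| + 1))) * 1 :=
          norm_mul_le_of_le h0' ht1
      _ = _ := mul_one _
  have hn : ‖((n : ℕ) : ℂ)‖ ≤ (n : ℝ) := by simp
  have hsn1 : ‖s ^ (n - 1)‖ ≤ (‖s₀‖ + 1) ^ (n - 1) := by
    rw [norm_pow]; exact pow_le_pow_left₀ (norm_nonneg _) hsN _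
  have hsn : ‖s ^ n‖ ≤ (‖s₀‖ + 1) ^ n := by
    rw [norm_pow]; exact pow_le_pow_left₀ (norm_nonneg _) hsN _
  have htn : ‖(t : ℂ) ^ (n - 1)‖ ≤ 1 := by
    rw [norm_pow]; exact pow_le_one₀ (norm_nonneg _) ht1
  rw [Dfun]
  have hU : ‖↑n * s ^ (n - 1) * (t : ℂ) ^ (n - 1) * K1 f ω (-1) (s * (t : ℂ)) +
      s ^ n * (t : ℂ) ^ (n - 1) * (K2 f ω (-1) (s * (t : ℂ)) * (t : ℂ))‖
      ≤ (n : ℝ) * (‖s₀‖ + 1) ^ (n - 1) * 1 *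
          ((∫ x, ‖f x‖) * Real.exp (B * R * (|s₀.im| + 1))) +
        (‖s₀‖ + 1) ^ n * 1 *
          (B * R * (∫ x, ‖f x‖) * Real.exp (B * R * (|s₀.im| + 1))) :=
    (norm_add_le _ _).trans (add_le_add
      (norm_mul_le_of_le (norm_mul_le_of_le (norm_mul_le_of_le hn hsn1) htn) hA)
      (norm_mul_le_of_le (norm_mul_le_of_le hsn htn) hA2))
  have hT1 := norm_mul_le_of_le hU hBv
  have hT2 := norm_mul_le_of_le
    (norm_mul_le_of_le (norm_mul_le_of_le hsn htn) hA) hB2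
  refine ((norm_add_le _ _).trans (add_le_add hT1 hT2)).trans (le_of_eq ?_)
  rw [show Real.exp (2 * (B * R) * (|s₀.im| + 1))
      = Real.exp (B * R * (|s₀.im| + 1)) * Real.exp (B * R * (|s₀.im| + 1)) by
    rw [← Real.exp_add]; congr 1; ring]
  ring

end GD

section Slevel

variable {R : ℝ} {f : EuclideanSpace ℝ (Fin n) → ℂ}

lemma IooFinite : IsFiniteMeasure (volume.restrict (Set.Ioo (0:ℝ) 1)) :=
  ⟨by rw [Measure.restrict_apply_univ]; simp [Real.volume_Ioo]⟩

lemma integral_Ioo_const (c : ℝ) : ∫ _t in Set.Ioo (0:ℝ) 1, c = c := by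
  rw [setIntegral_const]
  simp [Real.volume_Ioo]

lemma abs_le_one_of_Ioo {t : ℝ} (ht : t ∈ Set.Ioo (0:ℝ) 1) : |t| ≤ 1 := by
  rw [abs_of_pos ht.1]
  exact ht.2.le

lemma Gfun_cont_t (hR : 0 ≤ R) (hf : Integrable f volume)
    (hsupp : Function.support f ⊆ Metric.ball 0 R) (ω : EuclideanSpace ℝ (Fin n)) (s : ℂ) :
    Continuous fun t : ℝ => Gfun n f ω s t := by
  have hc : Continuous fun t : ℝ => s * (t : ℂ) :=
    continuous_const.mul Complex.continuous_ofReal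
  have h1 : Continuous fun t : ℝ => K1 f ω (-1) (s * (t : ℂ)) :=
    (K1_continuous_z (ε := -1) hR hf hsupp (norm_nonneg ω) le_rfl (by norm_num)).comp hc
  have h2 : Continuous fun t : ℝ => K1 (fun x => (starRingEnd ℂ) (f x)) ω 1 (s * (t : ℂ)) :=
    (K1_continuous_z (ε := 1) hR (conj_integrable hf) (conj_support hsupp)
      (norm_nonneg ω) le_rfl (by norm_num)).comp hc
  exact ((continuous_const.mul (Complex.continuous_ofReal.pow _)).mul h1).mul h2

lemma Dfun_cont_t (hR : 0 ≤ R) (hf : Integrable f volume)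
    (hsupp : Function.support f ⊆ Metric.ball 0 R) (ω : EuclideanSpace ℝ (Fin n)) (s : ℂ) :
    Continuous fun t : ℝ => Dfun n f ω s t := by
  have hc : Continuous fun t : ℝ => s * (t : ℂ) :=
    continuous_const.mul Complex.continuous_ofReal
  have h1 : Continuous fun t : ℝ => K1 f ω (-1) (s * (t : ℂ)) :=
    (K1_continuous_z (ε := -1) hR hf hsupp (norm_nonneg ω) le_rfl (by norm_num)).comp hc
  have h2 : Continuous fun t : ℝ => K1 (fun x => (starRingEnd ℂ) (f x)) ω 1 (s * (t : ℂ)) :=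
    (K1_continuous_z (ε := 1) hR (conj_integrable hf) (conj_support hsupp)
      (norm_nonneg ω) le_rfl (by norm_num)).comp hc
  have h3 : Continuous fun t : ℝ => K2 f ω (-1) (s * (t : ℂ)) :=
    (K2_continuous_z (ε := -1) hR hf hsupp (norm_nonneg ω) le_rfl (by norm_num)).comp hc
  have h4 : Continuous fun t : ℝ => K2 (fun x => (starRingEnd ℂ) (f x)) ω 1 (s * (t : ℂ)) :=
    (K2_continuous_z (ε := 1) hR (conj_integrable hf) (conj_support hsupp)
      (norm_nonneg ω) le_rfl (by norm_num)).comp hc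
  have hpow : Continuous fun t : ℝ => (t : ℂ) ^ (n - 1) :=
    Complex.continuous_ofReal.pow _
  exact ((((continuous_const.mul hpow).mul h1).add
      ((continuous_const.mul hpow).mul (h3.mul Complex.continuous_ofReal))).mul h2).add
    (((continuous_const.mul hpow).mul h1).mul (h4.mul Complex.continuous_ofReal))

lemma Gfun_cont_omega (hR : 0 ≤ R) (hf : Integrable f volume)
    (hsupp : Function.support f ⊆ Metric.ball 0 R) (s : ℂ) (t : ℝ) :
    Continuous fun ω : EuclideanSpace ℝ (Fin n) => Gfun n f ω s t := by
  have h1 : Continuous fun ω : EuclideanSpace ℝ (Fin n) => K1 f ω (-1) (s * (t : ℂ)) :=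
    K1_continuous_omega (ε := -1) hR hf hsupp (by norm_num) _
  have h2 : Continuous fun ω : EuclideanSpace ℝ (Fin n) =>
      K1 (fun x => (starRingEnd ℂ) (f x)) ω 1 (s * (t : ℂ)) :=
    K1_continuous_omega (ε := 1) hR (conj_integrable hf) (conj_support hsupp) (by norm_num) _
  exact (continuous_const.mul h1).mul h2

lemma Dfun_cont_omega (hR : 0 ≤ R) (hf : Integrable f volume)
    (hsupp : Function.support f ⊆ Metric.ball 0 R) (s : ℂ) (t : ℝ) :
    Continuous fun ω : EuclideanSpace ℝ (Fin n) => Dfun n f ω s t := by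
  have h1 : Continuous fun ω : EuclideanSpace ℝ (Fin n) => K1 f ω (-1) (s * (t : ℂ)) :=
    K1_continuous_omega (ε := -1) hR hf hsupp (by norm_num) _
  have h2 : Continuous fun ω : EuclideanSpace ℝ (Fin n) =>
      K1 (fun x => (starRingEnd ℂ) (f x)) ω 1 (s * (t : ℂ)) :=
    K1_continuous_omega (ε := 1) hR (conj_integrable hf) (conj_support hsupp) (by norm_num) _
  have h3 : Continuous fun ω : EuclideanSpace ℝ (Fin n) => K2 f ω (-1) (s * (t : ℂ)) :=
    K2_continuous_omega (ε := -1) hR hf hsupp (by norm_num) _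
  have h4 : Continuous fun ω : EuclideanSpace ℝ (Fin n) =>
      K2 (fun x => (starRingEnd ℂ) (f x)) ω 1 (s * (t : ℂ)) :=
    K2_continuous_omega (ε := 1) hR (conj_integrable hf) (conj_support hsupp) (by norm_num) _
  exact (((continuous_const.mul h1).add
      (continuous_const.mul (h3.mul continuous_const))).mul h2).add
    ((continuous_const.mul h1).mul (h4.mul continuous_const))

lemma intG_cont_omega (hR : 0 ≤ R) (hf : Integrable f volume)
    (hsupp : Function.support f ⊆ Metric.ball 0 R) (s : ℂ) :
    Continuous fun ω : EuclideanSpace ℝ (Fin n) =>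
      ∫ t in Set.Ioo (0:ℝ) 1, Gfun n f ω s t := by
  haveI := IooFinite
  rw [continuous_iff_continuousAt]
  intro ω₀
  apply continuousAt_of_dominated (bound := fun _ : ℝ =>
    ‖s‖ ^ n * ((∫ x, ‖f x‖) ^ 2 * Real.exp (2 * ((‖ω₀‖ + 1) * R) * |s.im|)))
  · exact .of_forall fun ω => (Gfun_cont_t hR hf hsupp ω s).aestronglyMeasurable
  · filter_upwards [Metric.ball_mem_nhds ω₀ one_pos] with ω hω
    filter_upwards [ae_restrict_mem measurableSet_Ioo] with t ht
    exact Gfun_bound hR hf hsupp (by positivity) (norm_le_of_mem_ball hω)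
      (abs_le_one_of_Ioo ht) s
  · exact integrable_const _
  · exact .of_forall fun t => (Gfun_cont_omega hR hf hsupp s t).continuousAt

lemma intD_cont_omega (hR : 0 ≤ R) (hf : Integrable f volume)
    (hsupp : Function.support f ⊆ Metric.ball 0 R) (s : ℂ) :
    Continuous fun ω : EuclideanSpace ℝ (Fin n) =>
      ∫ t in Set.Ioo (0:ℝ) 1, Dfun n f ω s t := by
  haveI := IooFinite
  rw [continuous_iff_continuousAt]
  intro ω₀
  apply continuousAt_of_dominated (bound := fun _ : ℝ =>
    ((n : ℝ) * (‖s‖ + 1) ^ (n - 1) + 2 * ((‖ω₀‖ + 1) * R) * (‖s‖ + 1) ^ n) *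
      ((∫ x, ‖f x‖) ^ 2 * Real.exp (2 * ((‖ω₀‖ + 1) * R) * (|s.im| + 1))))
  · exact .of_forall fun ω => (Dfun_cont_t hR hf hsupp ω s).aestronglyMeasurable
  · filter_upwards [Metric.ball_mem_nhds ω₀ one_pos] with ω hω
    filter_upwards [ae_restrict_mem measurableSet_Ioo] with t ht
    exact Dfun_bound hR hf hsupp (by positivity) (norm_le_of_mem_ball hω)
      (abs_le_one_of_Ioo ht) (Metric.mem_ball_self one_pos)
  · exact integrable_const _
  · exact .of_forall fun t => (Dfun_cont_omega hR hf hsupp s t).continuousAt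

lemma intG_integrable (hR : 0 ≤ R) (hf : Integrable f volume)
    (hsupp : Function.support f ⊆ Metric.ball 0 R) {ω : EuclideanSpace ℝ (Fin n)}
    (hω : ‖ω‖ ≤ 1) (s : ℂ) :
    Integrable (fun t => Gfun n f ω s t) (volume.restrict (Set.Ioo (0:ℝ) 1)) := by
  haveI := IooFinite
  refine Integrable.mono' (integrable_const
      (‖s‖ ^ n * ((∫ x, ‖f x‖) ^ 2 * Real.exp (2 * (1 * R) * |s.im|))))
    ((Gfun_cont_t hR hf hsupp ω s).aestronglyMeasurable) ?_
  filter_upwards [ae_restrict_mem measurableSet_Ioo] with t ht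
  exact Gfun_bound hR hf hsupp zero_le_one hω (abs_le_one_of_Ioo ht) s

lemma intG_norm_le (hR : 0 ≤ R) (hf : Integrable f volume)
    (hsupp : Function.support f ⊆ Metric.ball 0 R) {ω : EuclideanSpace ℝ (Fin n)}
    (hω : ‖ω‖ ≤ 1) (s : ℂ) :
    ‖∫ t in Set.Ioo (0:ℝ) 1, Gfun n f ω s t‖
      ≤ ‖s‖ ^ n * ((∫ x, ‖f x‖) ^ 2 * Real.exp (2 * (1 * R) * |s.im|)) := by
  haveI := IooFinite
  refine (norm_integral_le_of_norm_le (integrable_const _) ?_).trans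
    (le_of_eq (integral_Ioo_const _))
  filter_upwards [ae_restrict_mem measurableSet_Ioo] with t ht
  exact Gfun_bound hR hf hsupp zero_le_one hω (abs_le_one_of_Ioo ht) s

lemma intD_norm_le (hR : 0 ≤ R) (hf : Integrable f volume)
    (hsupp : Function.support f ⊆ Metric.ball 0 R) {ω : EuclideanSpace ℝ (Fin n)}
    (hω : ‖ω‖ ≤ 1) {s₀ s : ℂ} (hs : s ∈ Metric.ball s₀ 1) :
    ‖∫ t in Set.Ioo (0:ℝ) 1, Dfun n f ω s t‖
      ≤ ((n : ℝ) * (‖s₀‖ + 1) ^ (n - 1) + 2 * (1 * R) * (‖s₀‖ + 1) ^ n) *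
        ((∫ x, ‖f x‖) ^ 2 * Real.exp (2 * (1 * R) * (|s₀.im| + 1))) := by
  haveI := IooFinite
  refine (norm_integral_le_of_norm_le (integrable_const _) ?_).trans
    (le_of_eq (integral_Ioo_const _))
  filter_upwards [ae_restrict_mem measurableSet_Ioo] with t ht
  exact Dfun_bound hR hf hsupp zero_le_one hω (abs_le_one_of_Ioo ht) hs

lemma S1_hasDerivAt (hR : 0 ≤ R) (hf : Integrable f volume)
    (hsupp : Function.support f ⊆ Metric.ball 0 R) {ω : EuclideanSpace ℝ (Fin n)}
    (hω : ‖ω‖ ≤ 1) (s : ℂ) :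
    HasDerivAt (fun s => ∫ t in Set.Ioo (0:ℝ) 1, Gfun n f ω s t)
      (∫ t in Set.Ioo (0:ℝ) 1, Dfun n f ω s t) s := by
  haveI := IooFinite
  have key := hasDerivAt_integral_of_dominated_loc_of_deriv_le (𝕜 := ℂ)
    (μ := volume.restrict (Set.Ioo (0:ℝ) 1))
    (F := fun s t => Gfun n f ω s t) (F' := fun s t => Dfun n f ω s t) (x₀ := s)
    (bound := fun _ =>
      ((n : ℝ) * (‖s‖ + 1) ^ (n - 1) + 2 * (1 * R) * (‖s‖ + 1) ^ n) *
        ((∫ x, ‖f x‖) ^ 2 * Real.exp (2 * (1 * R) * (|s.im| + 1))))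
    (Metric.ball_mem_nhds _ one_pos)
    (.of_forall fun s' => (Gfun_cont_t hR hf hsupp ω s').aestronglyMeasurable)
    (intG_integrable hR hf hsupp hω s)
    ((Dfun_cont_t hR hf hsupp ω s).aestronglyMeasurable)
    ?_ (integrable_const _)
    (.of_forall fun t s' _ => Gfun_hasDerivAt hR hf hsupp ω t s')
  · exact key.2
  · filter_upwards [ae_restrict_mem measurableSet_Ioo] with t ht
    intro s' hs'
    exact Dfun_bound hR hf hsupp zero_le_one hω (abs_le_one_of_Ioo ht) hs'

end Slevel
end KernelAux

open KernelAux

theorem stmt2 (n : ℕ) (R : ℝ) (hR : 0 < R) :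
    ∃ C > 0, ∀ (f : EuclideanSpace ℝ (Fin n) → ℂ) (M : ℝ),
      MemLp f 2 volume →
      Function.support f ⊆ Metric.ball 0 R →
      0 ≤ M → (∫ x, ‖f x‖ ^ 2) ≤ M ^ 2 →
      Differentiable ℂ (I1 f) ∧
        ∀ s : ℂ, ‖I1 f s‖ ≤ C * ‖s‖ ^ n * Real.exp (2 * R * |s.im|) * M ^ 2 := by
  rcases n with _ | m
  · -- `n = 0` : the sphere is empty and `I1 f = 0`
    refine ⟨1, one_pos, fun f M hf2 hsupp hM0 hM2 => ?_⟩
    have hsph : Metric.sphere (0 : EuclideanSpace ℝ (Fin 0)) 1 = ∅ := by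
      ext x
      simp only [Metric.mem_sphere, Set.mem_empty_iff_false, iff_false]
      have hx : ‖x‖ = 0 := by simp [EuclideanSpace.norm_eq]
      rw [dist_zero_right, hx]
      norm_num
    have hI0 : I1 f = fun _ : ℂ => (0 : ℂ) := by
      funext s
      simp only [I1]
      rw [hsph, Measure.restrict_empty, integral_zero_measure]
    constructor
    · rw [hI0]; exact differentiable_const 0
    · intro s
      rw [hI0]
      simp only [norm_zero]
      positivity
  · -- `n = m + 1`
    have hR0 : (0 : ℝ) ≤ R := hR.le
    refine ⟨(μH[((m + 1 : ℕ) : ℝ) - 1]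
        (Metric.sphere (0 : EuclideanSpace ℝ (Fin (m + 1))) 1)).toReal *
        (volume (Metric.ball (0 : EuclideanSpace ℝ (Fin (m + 1))) R)).toReal + 1,
      add_pos_of_nonneg_of_pos (mul_nonneg ENNReal.toReal_nonneg ENNReal.toReal_nonneg) one_pos,
      fun f M hf2 hsupp hM0 hM2 => ?_⟩
    have hdm : ((m + 1 : ℕ) : ℝ) - 1 = (m : ℝ) := by push_cast; ring
    have hfin : μH[((m + 1 : ℕ) : ℝ) - 1]
        (Metric.sphere (0 : EuclideanSpace ℝ (Fin (m + 1))) 1) < ⊤ := by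
      rw [hdm]; exact sphere_hausdorff_lt_top m
    haveI hFinSph : IsFiniteMeasure
        ((μH[((m + 1 : ℕ) : ℝ) - 1] :
          Measure (EuclideanSpace ℝ (Fin (m + 1)))).restrict (Metric.sphere 0 1)) :=
      ⟨by rwa [Measure.restrict_apply_univ]⟩
    haveI hballfin : IsFiniteMeasure
        (volume.restrict (Metric.ball (0 : EuclideanSpace ℝ (Fin (m + 1))) R)) :=
      ⟨by rw [Measure.restrict_apply_univ]; exact measure_ball_lt_top⟩
    -- integrability of f
    have hfi : Integrable f volume := by
      have h1 : MemLp f 1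
          (volume.restrict (Metric.ball (0 : EuclideanSpace ℝ (Fin (m + 1))) R)) :=
        (hf2.restrict _).mono_exponent (by norm_num)
      exact (integrableOn_iff_integrable_of_support_subset hsupp).mp
        (memLp_one_iff_integrable.mp h1)
    have hL0 : (0 : ℝ) ≤ ∫ x, ‖f x‖ := integral_nonneg fun x => norm_nonneg _
    -- Cauchy-Schwarz bound
    have hL2 : (∫ x, ‖f x‖) ^ 2
        ≤ (volume (Metric.ball (0 : EuclideanSpace ℝ (Fin (m + 1))) R)).toReal * M ^ 2 := by
      have hLeq : (∫ x, ‖f x‖)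
          = ∫ x in Metric.ball (0 : EuclideanSpace ℝ (Fin (m + 1))) R, ‖f x‖ := by
        rw [setIntegral_eq_integral_of_forall_compl_eq_zero]
        intro x hx
        rw [norm_eq_zero]
        exact Function.notMem_support.mp fun hs => hx (hsupp hs)
      have hconj2 : Real.HolderConjugate 2 2 := Real.HolderConjugate.two_two
      have hm2 : MemLp (fun x => ‖f x‖) (ENNReal.ofReal 2)
          (volume.restrict (Metric.ball (0 : EuclideanSpace ℝ (Fin (m + 1))) R)) := by
        rw [show ENNReal.ofReal (2:ℝ) = 2 by norm_num]
        exact (hf2.restrict _).norm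
      have hm1 : MemLp (fun _ : EuclideanSpace ℝ (Fin (m + 1)) => (1 : ℝ)) (ENNReal.ofReal 2)
          (volume.restrict (Metric.ball (0 : EuclideanSpace ℝ (Fin (m + 1))) R)) :=
        memLp_const 1
      have hold := integral_mul_le_Lp_mul_Lq_of_nonneg hconj2
        (μ := volume.restrict (Metric.ball (0 : EuclideanSpace ℝ (Fin (m + 1))) R))
        (Filter.Eventually.of_forall fun x => norm_nonneg (f x))
        (Filter.Eventually.of_forall fun _ => zero_le_one) hm2 hm1
      have hI20 : (0:ℝ) ≤ ∫ x in Metric.ball (0 : EuclideanSpace ℝ (Fin (m + 1))) R,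
          ‖f x‖ ^ (2:ℝ) :=
        integral_nonneg fun x => Real.rpow_nonneg (norm_nonneg _) _
      have hone : (∫ _x in Metric.ball (0 : EuclideanSpace ℝ (Fin (m + 1))) R, (1:ℝ) ^ (2:ℝ))
          = (volume (Metric.ball (0 : EuclideanSpace ℝ (Fin (m + 1))) R)).toReal := by
        simp [integral_const, Measure.real, Measure.restrict_apply_univ]
      have hfull : (∫ x in Metric.ball (0 : EuclideanSpace ℝ (Fin (m + 1))) R, ‖f x‖ ^ (2:ℝ))
          ≤ M ^ 2 := by
        have hint2 : Integrable (fun x => ‖f x‖ ^ (2:ℝ)) volume := by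
          simpa using hf2.integrable_norm_rpow (by norm_num) (by norm_num)
        have hsub : (∫ x in Metric.ball (0 : EuclideanSpace ℝ (Fin (m + 1))) R, ‖f x‖ ^ (2:ℝ))
            ≤ ∫ x, ‖f x‖ ^ (2:ℝ) :=
          setIntegral_le_integral hint2
            (Filter.Eventually.of_forall fun x => Real.rpow_nonneg (norm_nonneg _) _)
        have heq : (∫ x, ‖f x‖ ^ (2:ℝ)) = ∫ x, ‖f x‖ ^ 2 := by
          congr 1
          funext x
          rw [show (2:ℝ) = ((2:ℕ) : ℝ) by norm_num, Real.rpow_natCast]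
        rw [heq] at hsub
        linarith
      have hLle : (∫ x, ‖f x‖)
          ≤ (∫ x in Metric.ball (0 : EuclideanSpace ℝ (Fin (m + 1))) R, ‖f x‖ ^ (2:ℝ)) ^ (1/2 : ℝ) *
            ((volume (Metric.ball (0 : EuclideanSpace ℝ (Fin (m + 1))) R)).toReal) ^ (1/2 : ℝ) := by
        rw [hLeq]
        calc (∫ x in Metric.ball (0 : EuclideanSpace ℝ (Fin (m + 1))) R, ‖f x‖)
            = ∫ x in Metric.ball (0 : EuclideanSpace ℝ (Fin (m + 1))) R, ‖f x‖ * 1 := by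
              simp
          _ ≤ _ := by
              rw [← hone]
              exact hold
      have hvol0 : (0:ℝ) ≤ (volume (Metric.ball (0 : EuclideanSpace ℝ (Fin (m + 1))) R)).toReal :=
        ENNReal.toReal_nonneg
      calc (∫ x, ‖f x‖) ^ 2
          ≤ ((∫ x in Metric.ball (0 : EuclideanSpace ℝ (Fin (m + 1))) R, ‖f x‖ ^ (2:ℝ)) ^ (1/2:ℝ) *
              ((volume (Metric.ball (0 : EuclideanSpace ℝ (Fin (m + 1))) R)).toReal) ^ (1/2:ℝ)) ^ 2 :=
            pow_le_pow_left₀ hL0 hLle 2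
        _ = (∫ x in Metric.ball (0 : EuclideanSpace ℝ (Fin (m + 1))) R, ‖f x‖ ^ (2:ℝ)) *
              (volume (Metric.ball (0 : EuclideanSpace ℝ (Fin (m + 1))) R)).toReal := by
            rw [mul_pow, ← Real.rpow_natCast (_ ^ (1/2:ℝ)) 2, ← Real.rpow_natCast (_ ^ (1/2:ℝ)) 2,
              ← Real.rpow_mul hI20, ← Real.rpow_mul hvol0]
            norm_num
        _ ≤ M ^ 2 * (volume (Metric.ball (0 : EuclideanSpace ℝ (Fin (m + 1))) R)).toReal :=
            mul_le_mul_of_nonneg_right hfull hvol0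
        _ = (volume (Metric.ball (0 : EuclideanSpace ℝ (Fin (m + 1))) R)).toReal * M ^ 2 :=
            mul_comm _ _
    -- rewriting I1 in terms of Gfun
    have hI1eq : ∀ s : ℂ, I1 f s
        = ∫ ω in Metric.sphere (0 : EuclideanSpace ℝ (Fin (m + 1))) 1,
            (∫ t in Set.Ioo (0:ℝ) 1, Gfun (m + 1) f ω s t) ∂ μH[((m + 1 : ℕ) : ℝ) - 1] := by
      intro s
      refine integral_congr_ae (Filter.Eventually.of_forall fun ω => ?_)
      refine integral_congr_ae (Filter.Eventually.of_forall fun t => ?_)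
      simp only [Gfun, K1]
      rw [show (fun x : EuclideanSpace ℝ (Fin (m+1)) =>
            f x * Complex.exp (-Complex.I * s * (t : ℂ) * ((⟪ω, x⟫_ℝ : ℝ) : ℂ)))
          = (fun x : EuclideanSpace ℝ (Fin (m+1)) =>
            f x * Complex.exp (((-1 : ℝ) : ℂ) * Complex.I * (s * (t : ℂ)) * ((⟪ω, x⟫_ℝ : ℝ) : ℂ)))
        from funext fun x => by push_cast; ring_nf]
      rw [show (fun x : EuclideanSpace ℝ (Fin (m+1)) =>
            (starRingEnd ℂ) (f x) * Complex.exp (Complex.I * s * (t : ℂ) * ((⟪ω, x⟫_ℝ : ℝ) : ℂ)))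
          = (fun x : EuclideanSpace ℝ (Fin (m+1)) =>
            (starRingEnd ℂ) (f x) *
              Complex.exp (((1 : ℝ) : ℂ) * Complex.I * (s * (t : ℂ)) * ((⟪ω, x⟫_ℝ : ℝ) : ℂ)))
        from funext fun x => by push_cast; ring_nf]
    -- derivative of the sphere integral
    have hd : ∀ s : ℂ, HasDerivAt
        (fun s => ∫ ω in Metric.sphere (0 : EuclideanSpace ℝ (Fin (m + 1))) 1,
          (∫ t in Set.Ioo (0:ℝ) 1, Gfun (m + 1) f ω s t) ∂ μH[((m + 1 : ℕ) : ℝ) - 1])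
        (∫ ω in Metric.sphere (0 : EuclideanSpace ℝ (Fin (m + 1))) 1,
          (∫ t in Set.Ioo (0:ℝ) 1, Dfun (m + 1) f ω s t) ∂ μH[((m + 1 : ℕ) : ℝ) - 1]) s := by
      intro s
      have key := hasDerivAt_integral_of_dominated_loc_of_deriv_le (𝕜 := ℂ)
        (μ := (μH[((m + 1 : ℕ) : ℝ) - 1] :
          Measure (EuclideanSpace ℝ (Fin (m + 1)))).restrict (Metric.sphere 0 1))
        (F := fun s ω => ∫ t in Set.Ioo (0:ℝ) 1, Gfun (m + 1) f ω s t)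
        (F' := fun s ω => ∫ t in Set.Ioo (0:ℝ) 1, Dfun (m + 1) f ω s t)
        (x₀ := s)
        (bound := fun _ =>
          (((m + 1 : ℕ) : ℝ) * (‖s‖ + 1) ^ ((m + 1) - 1) + 2 * (1 * R) * (‖s‖ + 1) ^ (m + 1)) *
            ((∫ x, ‖f x‖) ^ 2 * Real.exp (2 * (1 * R) * (|s.im| + 1))))
        (Metric.ball_mem_nhds _ one_pos)
        (.of_forall fun s' => (intG_cont_omega hR0 hfi hsupp s').aestronglyMeasurable)
        ?_ ((intD_cont_omega hR0 hfi hsupp s).aestronglyMeasurable)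
        ?_ (integrable_const _) ?_
      · exact key.2
      · -- integrability at s
        refine Integrable.mono' (integrable_const
            (‖s‖ ^ (m + 1) * ((∫ x, ‖f x‖) ^ 2 * Real.exp (2 * (1 * R) * |s.im|))))
          ((intG_cont_omega hR0 hfi hsupp s).aestronglyMeasurable) ?_
        filter_upwards [ae_restrict_mem Metric.isClosed_sphere.measurableSet] with ω hω
        exact intG_norm_le hR0 hfi hsupp (le_of_eq (mem_sphere_zero_iff_norm.mp hω)) s
      · -- bound on the derivative
        filter_upwards [ae_restrict_mem Metric.isClosed_sphere.measurableSet] with ω hω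
        intro s' hs'
        exact intD_norm_le hR0 hfi hsupp (le_of_eq (mem_sphere_zero_iff_norm.mp hω)) hs'
      · -- differentiability a.e.
        filter_upwards [ae_restrict_mem Metric.isClosed_sphere.measurableSet] with ω hω
        intro s' _
        exact S1_hasDerivAt hR0 hfi hsupp (le_of_eq (mem_sphere_zero_iff_norm.mp hω)) s'
    have hfuneq : I1 f = fun s => ∫ ω in Metric.sphere (0 : EuclideanSpace ℝ (Fin (m + 1))) 1,
        (∫ t in Set.Ioo (0:ℝ) 1, Gfun (m + 1) f ω s t) ∂ μH[((m + 1 : ℕ) : ℝ) - 1] :=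
      funext hI1eq
    constructor
    · rw [hfuneq]
      exact fun s => (hd s).differentiableAt
    · intro s
      rw [hI1eq s]
      have hb : ‖∫ ω in Metric.sphere (0 : EuclideanSpace ℝ (Fin (m + 1))) 1,
          (∫ t in Set.Ioo (0:ℝ) 1, Gfun (m + 1) f ω s t) ∂ μH[((m + 1 : ℕ) : ℝ) - 1]‖
          ≤ (μH[((m + 1 : ℕ) : ℝ) - 1]
              (Metric.sphere (0 : EuclideanSpace ℝ (Fin (m + 1))) 1)).toReal *
            (‖s‖ ^ (m + 1) * ((∫ x, ‖f x‖) ^ 2 * Real.exp (2 * (1 * R) * |s.im|))) := by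
        refine (norm_integral_le_of_norm_le (integrable_const
            (‖s‖ ^ (m + 1) * ((∫ x, ‖f x‖) ^ 2 * Real.exp (2 * (1 * R) * |s.im|)))) ?_).trans
          (le_of_eq ?_)
        · filter_upwards [ae_restrict_mem Metric.isClosed_sphere.measurableSet] with ω hω
          exact intG_norm_le hR0 hfi hsupp (le_of_eq (mem_sphere_zero_iff_norm.mp hω)) s
        · rw [integral_const, Measure.real, Measure.restrict_apply_univ, smul_eq_mul]
      refine hb.trans ?_
      rw [show (2 * (1 * R) * |s.im|) = 2 * R * |s.im| by ring]
      calc (μH[((m + 1 : ℕ) : ℝ) - 1]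
              (Metric.sphere (0 : EuclideanSpace ℝ (Fin (m + 1))) 1)).toReal *
            (‖s‖ ^ (m + 1) * ((∫ x, ‖f x‖) ^ 2 * Real.exp (2 * R * |s.im|)))
          = ((μH[((m + 1 : ℕ) : ℝ) - 1]
              (Metric.sphere (0 : EuclideanSpace ℝ (Fin (m + 1))) 1)).toReal * (∫ x, ‖f x‖) ^ 2) *
            (‖s‖ ^ (m + 1) * Real.exp (2 * R * |s.im|)) := by ring
        _ ≤ ((μH[((m + 1 : ℕ) : ℝ) - 1]
              (Metric.sphere (0 : EuclideanSpace ℝ (Fin (m + 1))) 1)).toReal *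
              ((volume (Metric.ball (0 : EuclideanSpace ℝ (Fin (m + 1))) R)).toReal * M ^ 2)) *
            (‖s‖ ^ (m + 1) * Real.exp (2 * R * |s.im|)) := by
            apply mul_le_mul_of_nonneg_right
              (mul_le_mul_of_nonneg_left hL2 ENNReal.toReal_nonneg)
            positivity
        _ = ((μH[((m + 1 : ℕ) : ℝ) - 1]
              (Metric.sphere (0 : EuclideanSpace ℝ (Fin (m + 1))) 1)).toReal *
              (volume (Metric.ball (0 : EuclideanSpace ℝ (Fin (m + 1))) R)).toReal) *
            (‖s‖ ^ (m + 1) * Real.exp (2 * R * |s.im|) * M ^ 2) := by ring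
        _ ≤ ((μH[((m + 1 : ℕ) : ℝ) - 1]
              (Metric.sphere (0 : EuclideanSpace ℝ (Fin (m + 1))) 1)).toReal *
              (volume (Metric.ball (0 : EuclideanSpace ℝ (Fin (m + 1))) R)).toReal + 1) *
            (‖s‖ ^ (m + 1) * Real.exp (2 * R * |s.im|) * M ^ 2) := by
            apply mul_le_mul_of_nonneg_right _ (by positivity)
            linarith
        _ = ((μH[((m + 1 : ℕ) : ℝ) - 1]
              (Metric.sphere (0 : EuclideanSpace ℝ (Fin (m + 1))) 1)).toReal *
              (volume (Metric.ball (0 : EuclideanSpace ℝ (Fin (m + 1))) R)).toReal + 1) *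
            ‖s‖ ^ (m + 1) * Real.exp (2 * R * |s.im|) * M ^ 2 := by ring
end
end

section
/- Let ε ∈ (0, e^{-1}), K > 1, R > 0, and assume 2^{1/4}((2R+3)π)^{1/3} K^{1/3} < |ln ε|^{1/4}. Set s₀ = ((2R+3)π)^{-1/3} K^{2/3} |ln ε|^{1/4}. Then s₀ > 2^{1/4} K, and moreover (2R+3)s₀ - (2|ln ε|/π)(K/s₀)² = -2((2R+3)²/π)^{1/3} K^{2/3} |ln ε|^{1/2} (1 - (1/2)|ln ε|^{-1/4}), which is at most -K^{2/3}|ln ε|^{1/2}. -/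
open Real

set_option maxHeartbeats 1000000 in
theorem stmt7 (ε K R s₀ : ℝ)
    (hε : 0 < ε) (hε' : ε < Real.exp (-1))
    (hK : 1 < K) (hR : 0 < R)
    (hcase : (2 : ℝ) ^ ((1 : ℝ) / 4) * ((2 * R + 3) * π) ^ ((1 : ℝ) / 3) * K ^ ((1 : ℝ) / 3)
        < |Real.log ε| ^ ((1 : ℝ) / 4))
    (hs₀ : s₀ = ((2 * R + 3) * π) ^ (-(1 : ℝ) / 3) * K ^ ((2 : ℝ) / 3)
        * |Real.log ε| ^ ((1 : ℝ) / 4)) :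
    (2 : ℝ) ^ ((1 : ℝ) / 4) * K < s₀ ∧
    (2 * R + 3) * s₀ - (2 * |Real.log ε| / π) * (K / s₀) ^ 2 =
      -2 * ((2 * R + 3) ^ 2 / π) ^ ((1 : ℝ) / 3) * K ^ ((2 : ℝ) / 3)
        * |Real.log ε| ^ ((1 : ℝ) / 2) * (1 - (1 / 2) * |Real.log ε| ^ (-(1 : ℝ) / 4)) ∧
    (2 * R + 3) * s₀ - (2 * |Real.log ε| / π) * (K / s₀) ^ 2 ≤
      -(K ^ ((2 : ℝ) / 3) * |Real.log ε| ^ ((1 : ℝ) / 2)) := by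
  have hπ : (0:ℝ) < π := Real.pi_pos
  have hπ3 : π < 3.15 := by
    have := Real.pi_lt_d2; linarith
  have hA : (0:ℝ) < (2 * R + 3) * π := by positivity
  have hlogε : Real.log ε < -1 := by
    have := Real.log_lt_log hε hε'
    rwa [Real.log_exp] at this
  have hL : (1:ℝ) < |Real.log ε| := by
    rw [abs_of_neg (by linarith)]; linarith
  have hLpos : (0:ℝ) < |Real.log ε| := by linarith
  set L := |Real.log ε| with hLdef
  set x := ((2 * R + 3) * π) ^ ((1:ℝ)/3) with hxdef
  set k := K ^ ((1:ℝ)/3) with hkdef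
  set l := L ^ ((1:ℝ)/4) with hldef
  set t := (2:ℝ) ^ ((1:ℝ)/4) with htdef
  have hKpos : (0:ℝ) < K := by linarith
  have hx : 0 < x := Real.rpow_pos_of_pos hA _
  have hk : 0 < k := Real.rpow_pos_of_pos hKpos _
  have hl : 0 < l := Real.rpow_pos_of_pos hLpos _
  have hx3 : x ^ 3 = (2 * R + 3) * π := by
    rw [hxdef, ← Real.rpow_natCast (_ ^ _) 3, ← Real.rpow_mul hA.le]
    norm_num
  have hk3 : k ^ 3 = K := by
    rw [hkdef, ← Real.rpow_natCast (_ ^ _) 3, ← Real.rpow_mul hKpos.le]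
    norm_num
  have hl4 : l ^ 4 = L := by
    rw [hldef, ← Real.rpow_natCast (_ ^ _) 4, ← Real.rpow_mul hLpos.le]
    norm_num
  have hK23 : K ^ ((2:ℝ)/3) = k ^ 2 := by
    rw [hkdef, ← Real.rpow_natCast (_ ^ _) 2, ← Real.rpow_mul hKpos.le]
    norm_num
  have hL12 : L ^ ((1:ℝ)/2) = l ^ 2 := by
    rw [hldef, ← Real.rpow_natCast (_ ^ _) 2, ← Real.rpow_mul hLpos.le]
    norm_num
  have hLm14 : L ^ (-(1:ℝ)/4) = l⁻¹ := by
    rw [hldef, ← Real.rpow_neg_one (_ ^ _), ← Real.rpow_mul hLpos.le]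
    norm_num
  have hAm13 : ((2 * R + 3) * π) ^ (-(1:ℝ)/3) = x⁻¹ := by
    rw [hxdef, ← Real.rpow_neg_one (_ ^ _), ← Real.rpow_mul hA.le]
    norm_num
  have hcube : ((2 * R + 3) ^ 2 / π) ^ ((1:ℝ)/3) = x ^ 2 / π := by
    have h1 : (2 * R + 3) ^ 2 / π = (x ^ 2 / π) ^ (3:ℕ) := by
      have hx6 : (x ^ 2) ^ (3:ℕ) = ((2 * R + 3) * π) ^ 2 := by
        rw [show ((x ^ 2) ^ (3:ℕ) : ℝ) = (x ^ 3) ^ 2 by ring, hx3]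
      rw [div_pow, hx6]
      field_simp
    rw [h1, ← Real.rpow_natCast (x ^ 2 / π) 3, ← Real.rpow_mul (by positivity)]
    norm_num
  have hs₀' : s₀ = x⁻¹ * k ^ 2 * l := by rw [hs₀, hAm13, hK23, hldef]
  have hs₀pos : 0 < s₀ := by rw [hs₀']; positivity
  have hl1 : 1 < l := by
    rw [hldef]
    exact Real.one_lt_rpow_iff_of_pos hLpos |>.mpr (Or.inl ⟨hL, by norm_num⟩)
  -- part 1
  have part1 : t * K < s₀ := by
    have hc : t * x * k < l := by rwa [hxdef, hkdef, hldef] at hcase ⊢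
    rw [hs₀', ← hk3]
    rw [show x⁻¹ * k ^ 2 * l = (k ^ 2 * l) / x by ring, lt_div_iff₀ hx]
    calc t * k ^ 3 * x = k ^ 2 * (t * x * k) := by ring
      _ < k ^ 2 * l := mul_lt_mul_of_pos_left hc (pow_pos hk 2)
  -- the expression
  have hx2π : π < x ^ 2 := by
    have h6 : π ^ 3 < (x ^ 2) ^ 3 := by
      have hx6 : (x ^ 2) ^ 3 = ((2 * R + 3) * π) ^ 2 := by
        rw [show ((x ^ 2) ^ 3 : ℝ) = (x ^ 3) ^ 2 by ring, hx3]
      rw [hx6]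
      nlinarith [mul_pos hR hπ, sq_nonneg R, sq_nonneg π]
    exact lt_of_pow_lt_pow_left₀ 3 (sq_nonneg x) h6
  have hexpr : (2 * R + 3) * s₀ - (2 * L / π) * (K / s₀) ^ 2
      = x ^ 2 * k ^ 2 * l / π - 2 * x ^ 2 * k ^ 2 * l ^ 2 / π := by
    have h23 : 2 * R + 3 = x ^ 3 / π := by rw [hx3]; field_simp
    rw [hs₀', ← hk3, ← hl4, h23]
    field_simp
  constructor
  · exact part1
  constructor
  · rw [hexpr, hcube, hK23, hL12, hLm14]
    field_simp
    ring
  · rw [hexpr, hK23, hL12]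
    rw [div_sub_div_same, div_le_iff₀ hπ]
    have h1 : (0:ℝ) ≤ (x ^ 2 - π) * k ^ 2 * l * (2 * l - 1) :=
      mul_nonneg (mul_nonneg (mul_nonneg (sub_nonneg.mpr hx2π.le) (pow_pos hk 2).le) hl.le)
        (by linarith)
    have h2 : (0:ℝ) ≤ π * k ^ 2 * l * (l - 1) :=
      mul_nonneg (mul_nonneg (mul_nonneg hπ.le (pow_pos hk 2).le) hl.le) (by linarith)
    have key : -(k ^ 2 * l ^ 2) * π - (x ^ 2 * k ^ 2 * l - 2 * x ^ 2 * k ^ 2 * l ^ 2)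
        = (x ^ 2 - π) * k ^ 2 * l * (2 * l - 1) + π * k ^ 2 * l * (l - 1) := by ring
    linarith [h1, h2, key]
end
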